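/- (Lemma 1) For any depth d ≥ 1 and any data sequence x_{1:n} ∈ 𝒳^n with n ≤ 2^d, the Partition Tree Weighting mixture satisfies the recursion PTW_d(x_{1:n}) = (1/2)·ρ(x_{1:n}) + (1/2)·PTW_{d−1}(x_{1:k})·PTW_{d−1}(x_{k+1:n}), where k = 2^{d−1}. -/

import Mathlib

/-- The set `𝒞_d(t)` of binary temporal partitions starting at `t`, represented as
finsets of segments `(a,b)` (each segment identified with the interval `{a,…,b}`). -/
def Cpt : ℕ → ℕ → Finset (Finset (ℕ × ℕ))
  | 0, t => {{(t, t)}}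
  | d + 1, t =>
      insert {(t, t + 2 ^ (d + 1) - 1)}
        ((Cpt d t ×ˢ Cpt d (t + 2 ^ d)).image fun p => p.1 ∪ p.2)

/-- `Γ_d(P)`: the number of nodes of depth less than `d` in the binary partition tree
associated with `P ∈ 𝒞_d(t)`, defined by the recursion `Γ_0(P) = 0`,
`Γ_{d+1}({(t, t+2^{d+1}-1)}) = 1` and `Γ_{d+1}(S₁ ∪ S₂) = Γ_d(S₁) + Γ_d(S₂) + 1`. -/
def Gam : ℕ → ℕ → Finset (ℕ × ℕ) → ℕ
  | 0, _, _ => 0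
  | d + 1, t, P =>
      if P = {(t, t + 2 ^ (d + 1) - 1)} then 1
      else Gam d t (P.filter fun s => s.2 < t + 2 ^ d)
            + Gam d (t + 2 ^ d) (P.filter fun s => t + 2 ^ d ≤ s.1) + 1

/-- The substring `x_{a:min(b,n)}` of the (1-based) sequence `x` of length `n`,
treated as a standalone string; it is the empty string when `a > min(b,n)`. -/
def seg {𝒳 : Type*} (x : ℕ → 𝒳) (n a b : ℕ) : List 𝒳 :=
  (List.range (min b n + 1 - a)).map fun i => x (a + i)

/-- `ρ` is a probabilistic data generating source: `ρ(ε) = 1`,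
`ρ(x_{1:n}) = ∑_{y ∈ 𝒳} ρ(x_{1:n} y)`, and all values lie in `[0,1]`. -/
def IsSource {𝒳 : Type*} [Fintype 𝒳] (ρ : List 𝒳 → ℝ) : Prop :=
  ρ [] = 1 ∧ (∀ l : List 𝒳, ρ l = ∑ y : 𝒳, ρ (l ++ [y])) ∧
    ∀ l : List 𝒳, ρ l ∈ Set.Icc (0 : ℝ) 1

/-- The Partition Tree Weighting mixture
`PTW_d(x_{1:n}) = ∑_{P ∈ 𝒞_d} 2^{-Γ_d(P)} ∏_{(a,b) ∈ P} ρ(x_{a:b})` (for `n ≤ 2^d`). -/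
noncomputable def PTW {𝒳 : Type*} (ρ : List 𝒳 → ℝ) (d : ℕ) (x : ℕ → 𝒳) (n : ℕ) : ℝ :=
  ∑ P ∈ Cpt d 1, (2 : ℝ) ^ (-(Gam d 1 P : ℤ)) * ∏ s ∈ P, ρ (seg x n s.1 s.2)


section PTWHelpers

lemma mem_Cpt_succ {d t : ℕ} {P : Finset (ℕ × ℕ)} :
    P ∈ Cpt (d+1) t ↔ P = {(t, t + 2 ^ (d + 1) - 1)} ∨
      ∃ S₁ ∈ Cpt d t, ∃ S₂ ∈ Cpt d (t + 2 ^ d), S₁ ∪ S₂ = P := by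
  simp [Cpt, Finset.mem_insert, Finset.mem_image, Finset.mem_product]
  tauto

lemma Cpt_nonempty : ∀ d t (P : Finset (ℕ × ℕ)), P ∈ Cpt d t → P.Nonempty := by
  intro d
  induction d with
  | zero => intro t P hP; simp [Cpt] at hP; subst hP; simp
  | succ d ih =>
    intro t P hP
    rw [mem_Cpt_succ] at hP
    rcases hP with h | ⟨S₁, h1, S₂, h2, rfl⟩
    · subst h; simp
    · exact (ih t S₁ h1).mono Finset.subset_union_left

lemma Cpt_bounds : ∀ d t (P : Finset (ℕ × ℕ)), P ∈ Cpt d t → ∀ s ∈ P,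
    t ≤ s.1 ∧ s.1 ≤ s.2 ∧ s.2 < t + 2 ^ d := by
  intro d
  induction d with
  | zero => intro t P hP s hs; simp [Cpt] at hP; subst hP; simp at hs; subst hs; simp
  | succ d ih =>
    intro t P hP s hs
    rw [mem_Cpt_succ] at hP
    have h1 : (1:ℕ) ≤ 2 ^ d := Nat.one_le_two_pow
    have h2 : (2:ℕ) ^ (d+1) = 2 ^ d + 2 ^ d := by ring
    rcases hP with h | ⟨S₁, hS₁, S₂, hS₂, rfl⟩
    · subst h; simp at hs; subst hs; simp; omega
    · rcases Finset.mem_union.mp hs with h | h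
      · have := ih t S₁ hS₁ s h; omega
      · have := ih (t + 2^d) S₂ hS₂ s h; omega

lemma filter_left {d t : ℕ} {S₁ S₂ : Finset (ℕ × ℕ)} (h1 : S₁ ∈ Cpt d t)
    (h2 : S₂ ∈ Cpt d (t + 2 ^ d)) :
    (S₁ ∪ S₂).filter (fun s => s.2 < t + 2 ^ d) = S₁ := by
  rw [Finset.filter_union, Finset.filter_true_of_mem, Finset.filter_false_of_mem,
    Finset.union_empty]
  · intro s hs; have := Cpt_bounds d (t + 2^d) S₂ h2 s hs; omega
  · intro s hs; exact (Cpt_bounds d t S₁ h1 s hs).2.2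

lemma filter_right {d t : ℕ} {S₁ S₂ : Finset (ℕ × ℕ)} (h1 : S₁ ∈ Cpt d t)
    (h2 : S₂ ∈ Cpt d (t + 2 ^ d)) :
    (S₁ ∪ S₂).filter (fun s => t + 2 ^ d ≤ s.1) = S₂ := by
  rw [Finset.filter_union, Finset.filter_false_of_mem, Finset.filter_true_of_mem,
    Finset.empty_union]
  · intro s hs; exact (Cpt_bounds d (t + 2^d) S₂ h2 s hs).1
  · intro s hs; have := Cpt_bounds d t S₁ h1 s hs; omega

lemma Cpt_disjoint {d t : ℕ} {S₁ S₂ : Finset (ℕ × ℕ)} (h1 : S₁ ∈ Cpt d t)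
    (h2 : S₂ ∈ Cpt d (t + 2 ^ d)) : Disjoint S₁ S₂ := by
  rw [Finset.disjoint_left]
  intro s hs1 hs2
  have := Cpt_bounds d t S₁ h1 s hs1
  have := Cpt_bounds d (t + 2^d) S₂ h2 s hs2
  omega

lemma union_ne {d t : ℕ} {S₁ S₂ : Finset (ℕ × ℕ)} (h1 : S₁ ∈ Cpt d t)
    (h2 : S₂ ∈ Cpt d (t + 2 ^ d)) : S₁ ∪ S₂ ≠ {(t, t + 2 ^ (d + 1) - 1)} := by
  intro h
  obtain ⟨s, hs⟩ := Cpt_nonempty d t S₁ h1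
  have hb := (Cpt_bounds d t S₁ h1 s hs).2.2
  have hmem : s ∈ S₁ ∪ S₂ := Finset.mem_union_left _ hs
  rw [h, Finset.mem_singleton] at hmem
  have h1' : (1:ℕ) ≤ 2 ^ d := Nat.one_le_two_pow
  have h2' : (2:ℕ) ^ (d+1) = 2 ^ d + 2 ^ d := by ring
  have : s.2 = t + 2 ^ (d+1) - 1 := by rw [hmem]
  omega

lemma Gam_union {d t : ℕ} {S₁ S₂ : Finset (ℕ × ℕ)} (h1 : S₁ ∈ Cpt d t)
    (h2 : S₂ ∈ Cpt d (t + 2 ^ d)) :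
    Gam (d+1) t (S₁ ∪ S₂) = Gam d t S₁ + Gam d (t + 2 ^ d) S₂ + 1 := by
  rw [Gam, if_neg (union_ne h1 h2), filter_left h1 h2, filter_right h1 h2]

def shiftSeg (k : ℕ) (s : ℕ × ℕ) : ℕ × ℕ := (s.1 + k, s.2 + k)

lemma shiftSeg_inj (k : ℕ) : Function.Injective (shiftSeg k) := by
  intro a b h
  simp only [shiftSeg, Prod.mk.injEq] at h
  exact Prod.ext (by omega) (by omega)

lemma Cpt_shift (k : ℕ) : ∀ d t, Cpt d (t + k) =
    (Cpt d t).image (fun P => P.image (shiftSeg k)) := by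
  intro d
  induction d with
  | zero => intro t; simp [Cpt, shiftSeg]
  | succ d ih =>
    intro t
    have hp : (1:ℕ) ≤ 2 ^ (d+1) := Nat.one_le_two_pow
    rw [Cpt, Cpt, Finset.image_insert]
    congr 1
    · rw [Finset.image_singleton]; simp only [shiftSeg]
      congr 2
      omega
    · rw [show t + k + 2 ^ d = (t + 2 ^ d) + k by omega, ih, ih]
      ext Q
      simp only [Finset.mem_image, Finset.mem_product, Prod.exists]
      constructor
      · rintro ⟨a, b, ⟨⟨A, hA, rfl⟩, ⟨B, hB, rfl⟩⟩, rfl⟩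
        exact ⟨A ∪ B, ⟨A, B, ⟨hA, hB⟩, rfl⟩, (Finset.image_union _ _)⟩
      · rintro ⟨P, ⟨A, B, ⟨hA, hB⟩, rfl⟩, rfl⟩
        exact ⟨A.image (shiftSeg k), B.image (shiftSeg k),
          ⟨⟨A, hA, rfl⟩, ⟨B, hB, rfl⟩⟩, (Finset.image_union _ _).symm⟩

lemma Gam_shift (k : ℕ) : ∀ d t (P : Finset (ℕ × ℕ)), P ∈ Cpt d t →
    Gam d (t + k) (P.image (shiftSeg k)) = Gam d t P := by
  intro d
  induction d with
  | zero => intro t P _; simp [Gam]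
  | succ d ih =>
    intro t P hP
    have hp : (1:ℕ) ≤ 2 ^ (d+1) := Nat.one_le_two_pow
    rcases mem_Cpt_succ.mp hP with h | ⟨S₁, h1, S₂, h2, rfl⟩
    · subst h
      rw [Gam, Gam, if_pos rfl, if_pos]
      rw [Finset.image_singleton]
      simp only [shiftSeg]
      congr 2
      omega
    · rw [Finset.image_union]
      have h1' : S₁.image (shiftSeg k) ∈ Cpt d (t + k) := by
        rw [Cpt_shift k d t]; exact Finset.mem_image_of_mem _ h1
      have h2' : S₂.image (shiftSeg k) ∈ Cpt d (t + k + 2 ^ d) := by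
        rw [show t + k + 2 ^ d = (t + 2 ^ d) + k by omega, Cpt_shift k d (t + 2^d)]
        exact Finset.mem_image_of_mem _ h2
      rw [Gam_union h1' h2', Gam_union h1 h2, ih t S₁ h1,
        show t + k + 2 ^ d = (t + 2 ^ d) + k by omega, ih (t + 2 ^ d) S₂ h2]

lemma seg_trunc {𝒳 : Type*} (x : ℕ → 𝒳) (n m a b : ℕ) (hb : b ≤ m) :
    seg x n a b = seg x (min m n) a b := by
  simp only [seg]
  rw [show min b n = min b (min m n) from by omega]

lemma seg_shift {𝒳 : Type*} (x : ℕ → 𝒳) (n k a b : ℕ) (ha : 1 ≤ a) :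
    seg x n (a + k) (b + k) = seg (fun i => x (i + k)) (n - k) a b := by
  simp only [seg]
  rw [show min (b + k) n + 1 - (a + k) = min b (n - k) + 1 - a from by omega]
  congr 1
  funext i
  congr 1
  omega

end PTWHelpers

/-- **Lemma 1.** For any depth `d ≥ 1` and any data sequence
`x_{1:n} ∈ 𝒳ⁿ` with `n ≤ 2^d`, the PTW mixture satisfies the recursion
`PTW_d(x_{1:n}) = ½·ρ(x_{1:n}) + ½·PTW_{d-1}(x_{1:k})·PTW_{d-1}(x_{k+1:n})`
where `k = 2^{d-1}`. -/
theorem ptw_recursion {𝒳 : Type*} [Fintype 𝒳] [Nonempty 𝒳]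
    (ρ : List 𝒳 → ℝ) (hρ : IsSource ρ)
    (d : ℕ) (hd : 1 ≤ d) (n : ℕ) (hn : n ≤ 2 ^ d) (x : ℕ → 𝒳) :
    PTW ρ d x n =
      1 / 2 * ρ (seg x n 1 n)
        + 1 / 2 * PTW ρ (d - 1) x (min (2 ^ (d - 1)) n)
            * PTW ρ (d - 1) (fun i => x (i + 2 ^ (d - 1))) (n - 2 ^ (d - 1)) := by
  obtain ⟨e, rfl⟩ : ∃ e, d = e + 1 := ⟨d - 1, by omega⟩
  simp only [Nat.add_sub_cancel]
  have hp : (1:ℕ) ≤ 2 ^ e := Nat.one_le_two_pow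
  have hp1 : (2:ℕ) ^ (e+1) = 2 ^ e + 2 ^ e := by ring
  have hnotmem : ({((1:ℕ), 1 + 2 ^ (e+1) - 1)} : Finset (ℕ × ℕ)) ∉
      (Cpt e 1 ×ˢ Cpt e (1 + 2 ^ e)).image (fun p => p.1 ∪ p.2) := by
    simp only [Finset.mem_image, Finset.mem_product, Prod.exists, not_exists]
    rintro A B ⟨⟨hA, hB⟩, h⟩
    exact union_ne hA hB h
  rw [PTW, Cpt, Finset.sum_insert hnotmem]
  congr 1
  · rw [show Gam (e+1) 1 {((1:ℕ), 1 + 2 ^ (e+1) - 1)} = 1 from by rw [Gam, if_pos rfl],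
      Finset.prod_singleton]
    rw [show seg x n 1 (1 + 2 ^ (e+1) - 1) = seg x n 1 n from by
      simp only [seg]; rw [show min (1 + 2 ^ (e+1) - 1) n = min n n from by omega]]
    norm_num
  · have hinj : ∀ p ∈ Cpt e 1 ×ˢ Cpt e (1 + 2 ^ e), ∀ q ∈ Cpt e 1 ×ˢ Cpt e (1 + 2 ^ e),
        (fun p : Finset (ℕ × ℕ) × Finset (ℕ × ℕ) => p.1 ∪ p.2) p =
        (fun p : Finset (ℕ × ℕ) × Finset (ℕ × ℕ) => p.1 ∪ p.2) q → p = q := by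
      rintro ⟨A, B⟩ hpq ⟨C, D⟩ hq h
      simp only [Finset.mem_product] at hpq hq
      simp only at h
      have hAC : A = C := by
        rw [← filter_left hpq.1 hpq.2, ← filter_left hq.1 hq.2, h]
      have hBD : B = D := by
        rw [← filter_right hpq.1 hpq.2, ← filter_right hq.1 hq.2, h]
      exact Prod.ext hAC hBD
    rw [Finset.sum_image hinj, Finset.sum_product]
    have hshift := Cpt_shift (2 ^ e) e 1
    dsimp only
    rw [PTW, PTW, mul_assoc, Finset.sum_mul_sum, Finset.mul_sum]
    refine Finset.sum_congr rfl fun A hA => ?_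
    rw [hshift, Finset.sum_image (fun p _ q _ h =>
      Finset.image_injective (shiftSeg_inj (2 ^ e)) h), Finset.mul_sum]
    refine Finset.sum_congr rfl fun B hB => ?_
    have hB' : B.image (shiftSeg (2 ^ e)) ∈ Cpt e (1 + 2 ^ e) := by
      rw [hshift]; exact Finset.mem_image_of_mem _ hB
    rw [Gam_union hA hB', Gam_shift (2 ^ e) e 1 B hB,
      Finset.prod_union (Cpt_disjoint hA hB'),
      Finset.prod_image (fun s _ t _ h => shiftSeg_inj (2 ^ e) h)]
    have e1 : ∏ s ∈ A, ρ (seg x n s.1 s.2) =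
        ∏ s ∈ A, ρ (seg x (min (2 ^ e) n) s.1 s.2) :=
      Finset.prod_congr rfl fun s hs => by
        have := (Cpt_bounds e 1 A hA s hs).2.2
        rw [seg_trunc x n (2 ^ e) s.1 s.2 (by omega)]
    have e2 : ∏ s ∈ B, ρ (seg x n (shiftSeg (2 ^ e) s).1 (shiftSeg (2 ^ e) s).2) =
        ∏ s ∈ B, ρ (seg (fun i => x (i + 2 ^ e)) (n - 2 ^ e) s.1 s.2) :=
      Finset.prod_congr rfl fun s hs => by
        have h1 := (Cpt_bounds e 1 B hB s hs).1
        simp only [shiftSeg]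
        rw [seg_shift x n (2 ^ e) s.1 s.2 h1]
    rw [e1, e2]
    have hzp : (2:ℝ) ^ (-((Gam e 1 A + Gam e 1 B + 1 : ℕ) : ℤ)) =
        (2:ℝ) ^ (-(Gam e 1 A : ℤ)) * (2:ℝ) ^ (-(Gam e 1 B : ℤ)) * (1/2) := by
      push_cast
      rw [show -((Gam e 1 A : ℤ) + (Gam e 1 B : ℤ) + 1) =
        (-(Gam e 1 A : ℤ)) + (-(Gam e 1 B : ℤ)) + (-1) from by ring,
        zpow_add₀ (two_ne_zero), zpow_add₀ (two_ne_zero)]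
      norm_num
    rw [hzp]
    ring
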